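/- Let p be an odd prime, ζ a primitive p-th root of unity, and φ(z) = (z − 1)^p + 2 − ζ. For all integers n > m ≥ 1, the principal ideals of ℤ[ζ] generated by φ^n(1) and φ^m(1) are coprime. -/

import Mathlib

open NumberField

theorem iterates_coprime (p : ℕ+) (hp : Fact (p : ℕ).Prime) (hodd : Odd (p : ℕ))
    (K : Type*) [Field K] [Algebra ℚ K] [IsCyclotomicExtension {(p : ℕ)} ℚ K]
    (ζ : 𝓞 K) (hζ : IsPrimitiveRoot ζ (p : ℕ))
    (φ : 𝓞 K → 𝓞 K) (hφ : ∀ z, φ z = (z - 1) ^ (p : ℕ) + 2 - ζ) :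
    ∀ n m : ℕ, 1 ≤ m → m < n →
      IsCoprime (Ideal.span {φ^[n] 1}) (Ideal.span {φ^[m] 1}) := by
  intro n m hm hmn
  rw [Ideal.isCoprime_span_singleton_iff]
  have hpne : (p : ℕ) ≠ 0 := hp.out.pos.ne'
  have hzp : ζ ^ (p : ℕ) = 1 := hζ.pow_eq_one
  set l : 𝓞 K := 1 - ζ with hl
  -- φ^[k] 0 = l for k ≥ 1
  have hphi0 : φ (0 : 𝓞 K) = l := by
    rw [hφ]
    have : ((0 : 𝓞 K) - 1) ^ (p : ℕ) = -1 := by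
      have : ((-1 : 𝓞 K)) ^ (p : ℕ) = -1 := hodd.neg_one_pow
      simpa using this
    rw [this, hl]; ring
  have hphil : φ l = l := by
    rw [hφ, hl]
    have h1 : ((1 : 𝓞 K) - ζ - 1) ^ (p : ℕ) = -1 := by
      have : ((1 : 𝓞 K) - ζ - 1) = -ζ := by ring
      rw [this, hodd.neg_pow, hzp]
    rw [h1]; ring
  have h0 : ∀ k, 1 ≤ k → φ^[k] (0 : 𝓞 K) = l := by
    intro k hk
    induction k with
    | zero => omega
    | succ k ih =>
      rcases Nat.eq_zero_or_pos k with h | h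
      · subst h; simpa using hphi0
      · rw [Function.iterate_succ_apply', ih h, hphil]
  -- divisibility is preserved by φ
  have hdvdφ : ∀ (c x y : 𝓞 K), c ∣ x - y → c ∣ φ x - φ y := by
    intro c x y h
    have heq : φ x - φ y = (x - 1) ^ (p : ℕ) - (y - 1) ^ (p : ℕ) := by
      rw [hφ, hφ]; ring
    rw [heq]
    have h2 : (x - 1) - (y - 1) ∣ (x - 1) ^ (p : ℕ) - (y - 1) ^ (p : ℕ) :=
      sub_dvd_pow_sub_pow _ _ _
    have h3 : (x - 1) - (y - 1) = x - y := by ring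
    exact dvd_trans (h3 ▸ h) h2
  have hdvditer : ∀ (k : ℕ) (c x y : 𝓞 K), c ∣ x - y → c ∣ φ^[k] x - φ^[k] y := by
    intro k
    induction k with
    | zero => intro c x y h; simpa using h
    | succ k ih =>
      intro c x y h
      rw [Function.iterate_succ_apply', Function.iterate_succ_apply']
      exact hdvdφ c _ _ (ih c x y h)
  -- l ∣ φ^[k] 1 - 1 for k ≥ 1
  have hA : ∀ k, 1 ≤ k → l ∣ φ^[k] 1 - 1 := by
    intro k hk
    induction k with
    | zero => omega
    | succ k ih =>
      rcases Nat.eq_zero_or_pos k with h | h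
      · subst h
        show l ∣ φ^[1] 1 - 1
        rw [Function.iterate_one, hφ]
        have : ((1 : 𝓞 K) - 1) ^ (p : ℕ) = 0 := by
          rw [sub_self, zero_pow hpne]
        rw [this]
        have : (0 : 𝓞 K) + 2 - ζ - 1 = l := by rw [hl]; ring
        rw [this]
      · rw [Function.iterate_succ_apply', hφ]
        have : (φ^[k] 1 - 1) ^ (p : ℕ) + 2 - ζ - 1 = (φ^[k] 1 - 1) ^ (p : ℕ) + l := by
          rw [hl]; ring
        rw [this]
        exact dvd_add (dvd_pow (ih h) hpne) dvd_rfl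
  -- main argument
  obtain ⟨c, hc⟩ := hA n (by omega)
  set k := n - m with hk
  have hkm : n = k + m := by omega
  have hbn : φ^[n] 1 = φ^[k] (φ^[m] 1) := by
    rw [hkm, Function.iterate_add_apply]
  have hdvd : φ^[m] 1 ∣ φ^[n] 1 - l := by
    have h1 : φ^[m] 1 ∣ φ^[k] (φ^[m] 1) - φ^[k] 0 := by
      apply hdvditer
      simp
    rwa [h0 k (by omega), ← hbn] at h1
  obtain ⟨d, hd⟩ := hdvd
  exact ⟨1 - c, c * d, by linear_combination hc - c * hd⟩
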